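/- Let k be a field of characteristic p ≥ 0, K = k((t)) the field of formal Laurent series over k with t-adic valuation v. Let e ≥ 1 be an integer and let x = t^e + Σ_{m>e} b_m t^m ∈ k[[t]] (so b_e = 1). Assume there exists an integer m with b_m ≠ 0 and m not divisible by p (no condition on p-divisibility when p = 0), and let r be the least such integer; note r ≥ e. Let D = (D_n)_{n≥0} be a Hasse–Schmidt derivation on K over k such that each D_n is continuous for the t-adic topology, D_1(x) = 1, and D_n(x) = 0 for all n ≥ 2. Then for every nonzero f ∈ K and every integer n ≥ 1, v(D_n(f)) ≥ (n−1)e − (2n−1)r + v(f). -/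

import Mathlib

namespace HSVaux

open HahnSeries

variable {k : Type*} [Field k]

/-- coefficients below `N` vanish, i.e. `v g ≥ N`. -/
def Vge (g : LaurentSeries k) (N : ℤ) : Prop := ∀ m : ℤ, m < N → g.coeff m = 0

lemma vge_mono {g : LaurentSeries k} {N N' : ℤ} (h : Vge g N) (hle : N' ≤ N) : Vge g N' :=
  fun m hm => h m (lt_of_lt_of_le hm hle)

lemma vge_zero (N : ℤ) : Vge (0 : LaurentSeries k) N := fun _ _ => rfl

lemma vge_add {g h : LaurentSeries k} {N : ℤ} (hg : Vge g N) (hh : Vge h N) :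
    Vge (g + h) N := by
  intro m hm
  rw [HahnSeries.coeff_add, hg m hm, hh m hm, add_zero]

lemma vge_neg {g : LaurentSeries k} {N : ℤ} (hg : Vge g N) : Vge (-g) N := by
  intro m hm
  rw [HahnSeries.coeff_neg, hg m hm, neg_zero]

lemma vge_sub {g h : LaurentSeries k} {N : ℤ} (hg : Vge g N) (hh : Vge h N) :
    Vge (g - h) N := by
  rw [sub_eq_add_neg]; exact vge_add hg (vge_neg hh)

lemma vge_smul {g : LaurentSeries k} {N : ℤ} (c : k) (hg : Vge g N) : Vge (c • g) N := by
  intro m hm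
  rw [HahnSeries.coeff_smul, hg m hm, smul_zero]

lemma vge_sum {ι : Type*} {s : Finset ι} {F : ι → LaurentSeries k} {N : ℤ}
    (h : ∀ i ∈ s, Vge (F i) N) : Vge (∑ i ∈ s, F i) N := by
  classical
  induction s using Finset.induction_on with
  | empty => simpa using vge_zero N
  | insert _ _ hx ih =>
    rw [Finset.sum_insert hx]
    exact vge_add (h _ (Finset.mem_insert_self _ _))
      (ih fun i hi => h i (Finset.mem_insert_of_mem hi))

lemma vge_single (a : ℤ) (c : k) : Vge (single a c : LaurentSeries k) a := by
  intro m hm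
  exact coeff_single_of_ne (by omega)

lemma vge_one : Vge (1 : LaurentSeries k) 0 := by
  intro m hm
  rw [HahnSeries.coeff_one, if_neg (by omega)]

lemma vge_mul {g h : LaurentSeries k} {A B : ℤ} (hg : Vge g A) (hh : Vge h B) :
    Vge (g * h) (A + B) := by
  intro m hm
  rw [HahnSeries.coeff_mul]
  apply Finset.sum_eq_zero
  intro ij hij
  rw [Finset.mem_addAntidiagonal] at hij
  obtain ⟨h1, h2, h3⟩ := hij
  exfalso
  have hA : A ≤ ij.1 := le_of_not_gt fun hc => h1 (hg _ hc)
  have hB : B ≤ ij.2 := le_of_not_gt fun hc => h2 (hh _ hc)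
  omega

lemma vge_order (g : LaurentSeries k) : Vge g g.order :=
  fun _ hm => coeff_eq_zero_of_lt_order hm

lemma order_le_of_vge {g : LaurentSeries k} {N : ℤ} (hg : g ≠ 0) (h : Vge g N) :
    N ≤ g.order :=
  le_of_not_gt fun hc => (coeff_order_eq_zero.not.mpr hg) (h _ hc)

lemma vge_of_T_mul {g : LaurentSeries k} {N : ℤ}
    (h : Vge ((single 1 1 : LaurentSeries k) * g) N) : Vge g (N - 1) := by
  intro m hm
  have := h (m + 1) (by omega)
  rwa [HahnSeries.coeff_single_mul_add, one_mul] at this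

lemma Tpow (a : ℕ) : (single 1 1 : LaurentSeries k) ^ a = single (a : ℤ) 1 := by
  induction a with
  | zero => simp [single_zero_one]
  | succ a ih =>
    rw [pow_succ, ih, single_mul_single, mul_one]
    norm_num

lemma Tinvpow (a : ℕ) : (single (-1) 1 : LaurentSeries k) ^ a = single (-(a : ℤ)) 1 := by
  induction a with
  | zero => simp [single_zero_one]
  | succ a ih =>
    rw [pow_succ, ih, single_mul_single, mul_one,
      show (-(a : ℤ) + -1) = -((a : ℤ) + 1) from by omega]
    norm_num

lemma TmulTinv : (single 1 1 : LaurentSeries k) * single (-1) 1 = 1 := by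
  rw [single_mul_single, mul_one]
  norm_num [single_zero_one]

lemma single_eq_pow_mul (m : ℤ) :
    (single m 1 : LaurentSeries k) =
      (single 1 1 : LaurentSeries k) ^ m.toNat * (single (-1) 1) ^ (-m).toNat := by
  rw [Tpow, Tinvpow, single_mul_single, mul_one,
    show ((m.toNat : ℤ) + -((-m).toNat : ℤ)) = m from by omega]

/-- coefficient of a finite sum -/
lemma sum_coeff {ι : Type*} (s : Finset ι) (F : ι → LaurentSeries k) (q : ℤ) :
    (∑ i ∈ s, F i).coeff q = ∑ i ∈ s, (F i).coeff q := by
  classical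
  induction s using Finset.induction_on with
  | empty => simp
  | insert _ _ hx ih => rw [Finset.sum_insert hx, Finset.sum_insert hx, HahnSeries.coeff_add, ih]

lemma smul_mul_assoc' (c : k) (g h : LaurentSeries k) : (c • g) * h = c • (g * h) := by
  rw [← HahnSeries.single_zero_mul_eq_smul, ← HahnSeries.single_zero_mul_eq_smul, mul_assoc]

lemma smul_single (a : ℤ) (c b : k) :
    c • (single a b : LaurentSeries k) = single a (c * b) := by
  ext q
  by_cases h : q = a <;>
    simp [HahnSeries.coeff_smul, HahnSeries.coeff_single, h]

open Multiplicative in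
lemma cont_mod (Dj : LaurentSeries k →ₗ[k] LaurentSeries k)
    (hc : Continuous Dj) (N : ℤ) :
    ∃ M : ℤ, ∀ g : LaurentSeries k, Vge g M → Vge (Dj g) N := by
  have hiff : ∀ (g : LaurentSeries k) (A : ℤ),
      Vge g A ↔ Valued.v g ≤ WithZero.exp (-A) :=
    fun g A => (LaurentSeries.valuation_le_iff_coeff_lt_eq_zero k).symm
  have step1 : ∀ (u : WithZero (Multiplicative ℤ)) (a : ℤ), u < WithZero.exp a →
      u ≤ WithZero.exp (a - 1) := by
    intro u a h
    rcases eq_or_ne u 0 with h0 | h0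
    · rw [h0]; exact zero_le'
    · rw [← WithZero.exp_log h0] at h ⊢
      rw [WithZero.exp_lt_exp] at h
      rw [WithZero.exp_le_exp]; omega
  have h0 : Dj 0 = 0 := map_zero _
  have ht : Filter.Tendsto Dj (nhds 0) (nhds (0 : LaurentSeries k)) := by
    simpa [h0] using hc.tendsto 0
  have hS : {g : LaurentSeries k | Vge g N} ∈ nhds (0 : LaurentSeries k) := by
    obtain ⟨a, ha⟩ := LaurentSeries.valuation_surjective k (WithZero.exp (-(N - 1)))
    have ha0 : Valued.v a ≠ 0 := by rw [ha]; exact WithZero.exp_ne_zero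
    rw [Valued.mem_nhds_zero]
    refine ⟨Units.mk0 (Valued.v.restrict a) (by
      intro h; exact ha0 (Valued.v.restrict_eq_zero_iff.mp h)), fun g hg => ?_⟩
    apply (hiff _ N).mpr
    have hg' : Valued.v g < WithZero.exp (-(N - 1)) := by
      rw [← ha]; exact Valued.v.restrict_lt_iff.mp (by simpa using hg)
    have := step1 _ _ hg'
    rwa [show -(N - 1) - 1 = -N by ring] at this
  have hmem : Dj ⁻¹' {g : LaurentSeries k | Vge g N} ∈ nhds (0 : LaurentSeries k) := ht hS
  rw [Valued.mem_nhds_zero] at hmem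
  obtain ⟨γ, hγ⟩ := hmem
  obtain ⟨a, ha⟩ := MonoidWithZeroHom.ValueGroup₀.restrict₀_surjective
    (MonoidWithZeroHom.ofClass (Valued.v : Valuation (LaurentSeries k) (WithZero (Multiplicative ℤ))))
    γ.1
  have ha' : Valued.v.restrict a = γ.1 := ha
  have ha0 : Valued.v a ≠ 0 := by
    intro h; apply γ.ne_zero; rw [← ha']; exact Valued.v.restrict_eq_zero_iff.mpr h
  refine ⟨1 - WithZero.log (Valued.v a), fun g hg => ?_⟩
  apply hγ
  show Valued.v.restrict g < γ.1
  rw [← ha', Valued.v.restrict_lt_iff]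
  have h1 := (hiff g _).mp hg
  refine lt_of_le_of_lt h1 ?_
  conv_rhs => rw [← WithZero.exp_log ha0]
  rw [WithZero.exp_lt_exp]
  omega

end HSVaux

open scoped Classical in
/-- The additive (t-adic) valuation on `k((t))`, with `v 0 = ⊤`. -/
noncomputable def addVal {k : Type*} [Field k] (f : LaurentSeries k) : WithTop ℤ :=
  if f = 0 then ⊤ else (f.order : WithTop ℤ)

/-- Let `k` be a field of characteristic `p ≥ 0` and `K = k((t))` with t-adic valuation `v`.
Let `x = t^e + Σ_{m>e} b_m t^m` (`e ≥ 1`), let `r` be the least integer `m` with `b_m ≠ 0`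
and `p ∤ m`, and let `D` be a Hasse–Schmidt derivation on `K` over `k`, continuous for the
t-adic topology, with `D 1 x = 1` and `D n x = 0` for `n ≥ 2`.  Then for every nonzero
`f ∈ K` and every `n ≥ 1`, `v (D n f) ≥ (n-1)e - (2n-1)r + v f`. -/
theorem hasse_schmidt_val_lower_bound_finite (k : Type*) [Field k]
    (e : ℤ) (he : 1 ≤ e) (x : LaurentSeries k)
    (hxe : x.coeff e = 1)
    (hxlow : ∀ m : ℤ, m < e → x.coeff m = 0)
    (r : ℤ)
    (hr : x.coeff r ≠ 0 ∧ ¬ ((ringChar k : ℤ) ∣ r))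
    (hrmin : ∀ m : ℤ, x.coeff m ≠ 0 → ¬ ((ringChar k : ℤ) ∣ m) → r ≤ m)
    (D : ℕ → LaurentSeries k →ₗ[k] LaurentSeries k)
    (hD0 : D 0 = LinearMap.id)
    (hLeib : ∀ (n : ℕ) (f g : LaurentSeries k),
      D n (f * g) = ∑ ℓ ∈ Finset.range (n + 1), D ℓ f * D (n - ℓ) g)
    (hcont : ∀ n : ℕ, Continuous (D n))
    (hx1 : D 1 x = 1) (hx2 : ∀ n : ℕ, 2 ≤ n → D n x = 0)
    (f : LaurentSeries k) (hf : f ≠ 0) (n : ℕ) (hn : 1 ≤ n) :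
    (((((n : ℤ) - 1) * e - (2 * (n : ℤ) - 1) * r + f.order : ℤ)) : WithTop ℤ)
      ≤ addVal (D n f) := by
  classical
  open HSVaux HahnSeries in
  set T : LaurentSeries k := HahnSeries.single 1 1 with hT
  set Ti : LaurentSeries k := HahnSeries.single (-1) 1 with hTi
  have hre : e ≤ r := le_of_not_gt fun h => hr.1 (hxlow r h)
  -- the valuation gain function
  set chi : ℕ → ℤ :=
    fun j => if j = 0 then 0 else ((j : ℤ) - 1) * e - (2 * (j : ℤ) - 1) * r with hchi
  have chi0 : chi 0 = 0 := by simp [hchi]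
  have chiP : ∀ j : ℕ, 1 ≤ j → chi j = ((j : ℤ) - 1) * e - (2 * (j : ℤ) - 1) * r := by
    intro j hj
    simp only [hchi, if_neg (by omega : j ≠ 0)]
  have chi_split : ∀ a b : ℕ, 1 ≤ a → 1 ≤ b →
      chi a + chi b = chi (a + b) + (r - e) := by
    intro a b ha hb
    rw [chiP a ha, chiP b hb, chiP (a + b) (by omega)]
    push_cast
    ring
  have chi_super : ∀ a b : ℕ, chi (a + b) ≤ chi a + chi b := by
    intro a b
    rcases Nat.eq_zero_or_pos a with h | h
    · subst h; simp [chi0]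
    rcases Nat.eq_zero_or_pos b with h' | h'
    · subst h'; simp [chi0]
    rw [chi_split a b h h']
    linarith
  have chi_r : ∀ j : ℕ, 1 ≤ j → chi j + r ≤ 0 := by
    intro j hj
    rw [chiP j hj]
    have h1 : (1 : ℤ) ≤ (j : ℤ) := by exact_mod_cast hj
    nlinarith [mul_nonneg (sub_nonneg.mpr h1) (by linarith : (0 : ℤ) ≤ 2 * r - e)]
  have hD0' : ∀ g : LaurentSeries k, D 0 g = g := fun g => by rw [hD0]; rfl
  -- D_j (1) = 0 for j ≥ 1
  have hDone : ∀ j : ℕ, 1 ≤ j → D j 1 = 0 := by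
    intro j
    induction j using Nat.strong_induction_on with
    | _ j IH =>
      intro hj
      have h := hLeib j 1 1
      rw [one_mul, Finset.sum_range_succ] at h
      have hsum : ∑ ℓ ∈ Finset.range j, D ℓ 1 * D (j - ℓ) 1 = D j 1 := by
        rw [Finset.sum_eq_single_of_mem 0 (Finset.mem_range.mpr (by omega))]
        · rw [hD0' 1, Nat.sub_zero, one_mul]
        · intro ℓ hℓ hℓ0
          rw [IH ℓ (Finset.mem_range.mp hℓ) (by omega), zero_mul]
      rw [hsum, Nat.sub_self, hD0' 1, mul_one] at h
      exact left_eq_add.mp h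
  -- peeling off the first and last term of the Leibniz rule
  have hpeel : ∀ (j : ℕ), 1 ≤ j → ∀ g : LaurentSeries k,
      D j (g * T) = g * D j T + D j g * T +
        ∑ ℓ ∈ Finset.Ioo 0 j, D ℓ g * D (j - ℓ) T := by
    intro j hj g
    have hset : Finset.range (j + 1) = insert 0 (insert j (Finset.Ioo 0 j)) := by
      ext ℓ
      simp only [Finset.mem_range, Finset.mem_insert, Finset.mem_Ioo]
      omega
    rw [hLeib j g T, hset, Finset.sum_insert (by simp; omega),
      Finset.sum_insert (by simp)]
    rw [hD0' g, Nat.sub_zero, Nat.sub_self, hD0' T]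
    ring
  -- powers bound
  have pow_bound : ∀ (J : ℕ) (b : LaurentSeries k) (B : ℤ),
      (∀ j, j ≤ J → Vge (D j b) (B + chi j)) →
      ∀ (m : ℕ) (j : ℕ), j ≤ J → Vge (D j (b ^ m)) ((m : ℤ) * B + chi j) := by
    intro J b B hb m
    induction m with
    | zero =>
      intro j hj
      rw [pow_zero]
      rcases Nat.eq_zero_or_pos j with h | h
      · subst h
        rw [hD0' 1]
        apply vge_mono vge_one
        simp [chi0]
      · rw [hDone j h]; exact vge_zero _
    | succ m ih =>
      intro j hj
      rw [pow_succ, hLeib]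
      apply vge_sum
      intro ℓ hℓ
      have hℓj : ℓ ≤ j := Nat.lt_succ_iff.mp (Finset.mem_range.mp hℓ)
      have h3 := vge_mul (ih ℓ (le_trans hℓj hj)) (hb (j - ℓ) (le_trans (Nat.sub_le j ℓ) hj))
      apply vge_mono h3
      have hs := chi_super ℓ (j - ℓ)
      rw [show ℓ + (j - ℓ) = j from by omega] at hs
      push_cast
      linarith
  have contM := fun (j : ℕ) (N : ℤ) => cont_mod (D j) (hcont j) N
  -- the key estimate : v (D_j t) ≥ 1 + chi j
  have key : ∀ j : ℕ, Vge (D j T) (1 + chi j) := by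
    intro j
    induction j using Nat.strong_induction_on with
    | _ n IH =>
    rcases Nat.eq_zero_or_pos n with hn0 | hn1
    · subst hn0
      rw [hD0' T]
      apply vge_mono (by rw [hT]; exact vge_single 1 (1 : k))
      simp [chi0]
    by_cases hy0 : D n T = 0
    · rw [hy0]; exact vge_zero _
    have q : ∀ (m : ℕ) (j : ℕ), j < n → Vge (D j (T ^ m)) ((m : ℤ) + chi j) := by
      intro m j hj
      have := pow_bound (n - 1) T 1 (fun i hi => IH i (by omega)) m j (by omega)
      simpa using this
    -- main approximation : D_n (t^(m+1)) ≈ (m+1) t^m D_n t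
    have P : ∀ m : ℕ, Vge (D n (T ^ (m + 1)) - ((m + 1) • (T ^ m * D n T)))
        (((m : ℤ) + 1) + chi n + (r - e)) := by
      intro m
      induction m with
      | zero =>
        have h0 : D n (T ^ (0 + 1)) - ((0 + 1) • (T ^ 0 * D n T)) = 0 := by
          simp
        rw [h0]; exact vge_zero _
      | succ m ihm =>
        have hstep : D n (T ^ (m + 1 + 1)) - ((m + 1 + 1) • (T ^ (m + 1) * D n T)) =
            (D n (T ^ (m + 1)) - ((m + 1) • (T ^ m * D n T))) * T +
            ∑ ℓ ∈ Finset.Ioo 0 n, D ℓ (T ^ (m + 1)) * D (n - ℓ) T := by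
          rw [show T ^ (m + 1 + 1) = T ^ (m + 1) * T from pow_succ T (m + 1),
            hpeel n hn1 (T ^ (m + 1)), show T ^ (m + 1) = T ^ m * T from pow_succ T m]
          push_cast [nsmul_eq_mul]
          ring
        rw [hstep]
        apply vge_add
        · have hTv : Vge T 1 := by rw [hT]; exact vge_single 1 (1 : k)
          apply vge_mono (vge_mul ihm hTv)
          push_cast
          linarith
        · apply vge_sum
          intro ℓ hℓ
          rw [Finset.mem_Ioo] at hℓ
          have h3 := vge_mul (q (m + 1) ℓ (by omega)) (IH (n - ℓ) (by omega))
          apply vge_mono h3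
          have hs := chi_split ℓ (n - ℓ) (by omega) (by omega)
          rw [show ℓ + (n - ℓ) = n from by omega] at hs
          push_cast
          linarith
    obtain ⟨M, hM⟩ := contM n (chi n + r)
    set N : ℤ := max M (r + 1) with hN
    set xN : LaurentSeries k :=
      ∑ m ∈ Finset.Ico e N, x.coeff m • HahnSeries.single m (1 : k) with hxN
    have hxNc : ∀ q : ℤ, xN.coeff q = if q ∈ Finset.Ico e N then x.coeff q else 0 := by
      intro q
      rw [hxN, sum_coeff]
      by_cases hq : q ∈ Finset.Ico e N
      · rw [if_pos hq, Finset.sum_eq_single_of_mem q hq]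
        · simp [HahnSeries.coeff_smul, HahnSeries.coeff_single_same]
        · intro m hm hne
          simp [HahnSeries.coeff_smul, coeff_single_of_ne (Ne.symm hne)]
      · rw [if_neg hq]
        apply Finset.sum_eq_zero
        intro m hm
        have hqm : q ≠ m := fun h => hq (h ▸ hm)
        simp [HahnSeries.coeff_smul, coeff_single_of_ne hqm]
    have hxsub : Vge (x - xN) N := by
      intro q hq
      rw [HahnSeries.coeff_sub, hxNc q]
      by_cases hq2 : q ∈ Finset.Ico e N
      · rw [if_pos hq2, sub_self]
      · rw [if_neg hq2]
        rw [Finset.mem_Ico] at hq2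
        have : q < e := by omega
        rw [hxlow q this, sub_zero]
    set SN : LaurentSeries k :=
      ∑ m ∈ Finset.Ico e N, HahnSeries.single (m - 1) (((m : ℤ) : k) * x.coeff m) with hSN
    -- bridge between singles and the terms appearing in `P`
    have hEN : Vge (D n xN - SN * D n T) (chi n + r) := by
      have hEq : D n xN - SN * D n T =
          ∑ m ∈ Finset.Ico e N, x.coeff m •
            (D n (T ^ (m.toNat - 1 + 1)) -
              ((m.toNat - 1 + 1) • (T ^ (m.toNat - 1) * D n T))) := by
        rw [hxN, hSN, map_sum, Finset.sum_mul, ← Finset.sum_sub_distrib]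
        apply Finset.sum_congr rfl
        intro m hm
        rw [Finset.mem_Ico] at hm
        have hm1 : 1 ≤ m := le_trans he hm.1
        have e1 : HahnSeries.single m (1 : k) = T ^ (m.toNat - 1 + 1) := by
          rw [hT, Tpow, show ((m.toNat - 1 + 1 : ℕ) : ℤ) = m from by omega]
        have e2 : HahnSeries.single (m - 1) (1 : k) = T ^ (m.toNat - 1) := by
          rw [hT, Tpow, show ((m.toNat - 1 : ℕ) : ℤ) = m - 1 from by omega]
        have hcast : ((m.toNat - 1 + 1 : ℕ) : k) = ((m : ℤ) : k) := by
          exact_mod_cast congrArg (Int.cast : ℤ → k)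
            (show ((m.toNat - 1 + 1 : ℕ) : ℤ) = m from by omega)
        have e3 : (HahnSeries.single (m - 1) (((m : ℤ) : k) * x.coeff m)
              : LaurentSeries k) * D n T =
            x.coeff m • ((m.toNat - 1 + 1) • (T ^ (m.toNat - 1) * D n T)) := by
          rw [← e2, ← Nat.cast_smul_eq_nsmul k, smul_smul, hcast,
            ← smul_mul_assoc', smul_single, mul_one, mul_comm (x.coeff m)]
        rw [map_smul, e1, e3, smul_sub]
      rw [hEq]
      apply vge_sum
      intro m hm
      rw [Finset.mem_Ico] at hm
      have hm1 : 1 ≤ m := le_trans he hm.1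
      apply vge_mono (vge_smul _ (P (m.toNat - 1)))
      have hmm : ((m.toNat - 1 : ℕ) : ℤ) + 1 = m := by omega
      rw [hmm]
      linarith [hm.1]
    -- D_n x has nonnegative valuation
    have hDnx : Vge (D n x) (chi n + r) := by
      rcases Nat.lt_or_ge n 2 with h2 | h2
      · have hn1' : n = 1 := by omega
        subst hn1'
        rw [hx1]
        exact vge_mono vge_one (chi_r 1 le_rfl)
      · rw [hx2 n h2]
        exact vge_zero _
    have hDsub : Vge (D n (x - xN)) (chi n + r) :=
      hM _ (vge_mono hxsub (le_max_left _ _))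
    have hSy : Vge (SN * D n T) (chi n + r) := by
      have hxNeq : SN * D n T = D n x - D n (x - xN) - (D n xN - SN * D n T) := by
        rw [map_sub]
        ring
      rw [hxNeq]
      exact vge_sub (vge_sub hDnx hDsub) hEN
    -- the coefficients of SN
    have hrc : ((r : ℤ) : k) * x.coeff r ≠ 0 := by
      apply mul_ne_zero _ hr.1
      intro h
      exact hr.2 ((CharP.intCast_eq_zero_iff k (ringChar k) r).mp h)
    have hrN : r < N := lt_of_lt_of_le (by omega) (le_max_right M (r + 1))
    have hSNlow : ∀ q : ℤ, q < r - 1 → SN.coeff q = 0 := by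
      intro q hq
      rw [hSN, sum_coeff]
      apply Finset.sum_eq_zero
      intro m hm
      rw [Finset.mem_Ico] at hm
      by_cases hqm : q = m - 1
      · subst hqm
        rw [HahnSeries.coeff_single_same]
        by_cases hxm : x.coeff m = 0
        · rw [hxm, mul_zero]
        · have hdvd : (ringChar k : ℤ) ∣ m := by
            by_contra hnd
            have := hrmin m hxm hnd
            omega
          rw [(CharP.intCast_eq_zero_iff k (ringChar k) m).mpr hdvd, zero_mul]
      · exact HahnSeries.coeff_single_of_ne hqm
    have hSNr : SN.coeff (r - 1) = ((r : ℤ) : k) * x.coeff r := by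
      rw [hSN, sum_coeff,
        Finset.sum_eq_single_of_mem r (Finset.mem_Ico.mpr ⟨hre, hrN⟩)]
      · rw [HahnSeries.coeff_single_same]
      · intro m hm hne
        exact HahnSeries.coeff_single_of_ne (by omega)
    -- extract the bound on D n T
    have hrem : Vge (SN - HahnSeries.single (r - 1) (((r : ℤ) : k) * x.coeff r)) r := by
      intro q hq
      rw [HahnSeries.coeff_sub]
      by_cases hq1 : q = r - 1
      · subst hq1
        rw [hSNr, HahnSeries.coeff_single_same, sub_self]
      · rw [hSNlow q (by omega), HahnSeries.coeff_single_of_ne hq1, sub_zero]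
    set w : ℤ := (D n T).order with hw
    have hco : (SN * D n T).coeff (w + (r - 1)) =
        ((r : ℤ) : k) * x.coeff r * (D n T).coeff w := by
      have hdec : SN * D n T =
          HahnSeries.single (r - 1) (((r : ℤ) : k) * x.coeff r) * D n T +
          (SN - HahnSeries.single (r - 1) (((r : ℤ) : k) * x.coeff r)) * D n T := by
        ring
      rw [hdec, HahnSeries.coeff_add, HahnSeries.coeff_single_mul_add,
        vge_mul hrem (vge_order (D n T)) (w + (r - 1)) (by omega), add_zero]
    have hwbig : chi n + 1 ≤ w := by
      by_contra hlt
      apply mul_ne_zero hrc (coeff_order_eq_zero.not.mpr hy0)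
      rw [← hco]
      exact hSy _ (by omega)
    exact vge_mono (vge_order (D n T)) (by omega)
  -- bound for negative powers of t
  have tinv : ∀ j : ℕ, Vge (D j Ti) (-1 + chi j) := by
    intro j
    induction j using Nat.strong_induction_on with
    | _ j IH =>
    rcases Nat.eq_zero_or_pos j with hj0 | hj1
    · subst hj0
      rw [hD0' Ti]
      apply vge_mono (by rw [hTi]; exact vge_single (-1) (1 : k))
      simp [chi0]
    have hTT : T * Ti = 1 := by rw [hT, hTi]; exact TmulTinv
    have h := hLeib j T Ti
    rw [hTT, hDone j hj1] at h
    have hset : Finset.range (j + 1) = insert 0 (Finset.Ioc 0 j) := by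
      ext ℓ
      simp only [Finset.mem_range, Finset.mem_insert, Finset.mem_Ioc]
      omega
    rw [hset, Finset.sum_insert (by simp), hD0' T, Nat.sub_zero] at h
    have hTD : T * D j Ti = -∑ ℓ ∈ Finset.Ioc 0 j, D ℓ T * D (j - ℓ) Ti := by
      linear_combination -h
    have hv : Vge (T * D j Ti) (chi j) := by
      rw [hTD]
      apply vge_neg
      apply vge_sum
      intro ℓ hℓ
      rw [Finset.mem_Ioc] at hℓ
      have h3 := vge_mul (key ℓ) (IH (j - ℓ) (by omega))
      apply vge_mono h3
      have hs := chi_super ℓ (j - ℓ)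
      rw [show ℓ + (j - ℓ) = j from by omega] at hs
      linarith
    have := vge_of_T_mul (by rw [← hT]; exact hv)
    exact vge_mono this (by omega)
  -- bound for all monomials
  have mono : ∀ (j : ℕ) (m : ℤ), Vge (D j (HahnSeries.single m (1 : k))) (m + chi j) := by
    intro j m
    have e3 : (HahnSeries.single m (1 : k) : LaurentSeries k) =
        T ^ m.toNat * Ti ^ (-m).toNat := by
      rw [hT, hTi]; exact single_eq_pow_mul m
    rw [e3, hLeib]
    apply vge_sum
    intro ℓ hℓ
    have hℓj : ℓ ≤ j := Nat.lt_succ_iff.mp (Finset.mem_range.mp hℓ)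
    have h1 := pow_bound j T 1 (fun i _ => key i) m.toNat ℓ hℓj
    have h2 := pow_bound j Ti (-1) (fun i _ => tinv i) (-m).toNat (j - ℓ) (Nat.sub_le j ℓ)
    apply vge_mono (vge_mul h1 h2)
    have hs := chi_super ℓ (j - ℓ)
    rw [show ℓ + (j - ℓ) = j from by omega] at hs
    have hmt : (m.toNat : ℤ) - ((-m).toNat : ℤ) = m := by omega
    linarith
  -- final assembly
  obtain ⟨M2, hM2⟩ := contM n (f.order + chi n)
  set N2 : ℤ := max M2 f.order with hN2
  set fN : LaurentSeries k :=
    ∑ m ∈ Finset.Ico f.order N2, f.coeff m • HahnSeries.single m (1 : k) with hfN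
  have hfNc : ∀ q : ℤ, fN.coeff q = if q ∈ Finset.Ico f.order N2 then f.coeff q else 0 := by
    intro q
    rw [hfN, sum_coeff]
    by_cases hq : q ∈ Finset.Ico f.order N2
    · rw [if_pos hq, Finset.sum_eq_single_of_mem q hq]
      · simp [HahnSeries.coeff_smul, HahnSeries.coeff_single_same]
      · intro m hm hne
        simp [HahnSeries.coeff_smul, HahnSeries.coeff_single_of_ne (Ne.symm hne)]
    · rw [if_neg hq]
      apply Finset.sum_eq_zero
      intro m hm
      have hqm : q ≠ m := fun h => hq (h ▸ hm)
      simp [HahnSeries.coeff_smul, HahnSeries.coeff_single_of_ne hqm]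
  have hfsub : Vge (f - fN) N2 := by
    intro q hq
    rw [HahnSeries.coeff_sub, hfNc q]
    by_cases hq2 : q ∈ Finset.Ico f.order N2
    · rw [if_pos hq2, sub_self]
    · rw [if_neg hq2]
      rw [Finset.mem_Ico] at hq2
      have : q < f.order := by omega
      rw [HahnSeries.coeff_eq_zero_of_lt_order this, sub_zero]
  have hDf : Vge (D n f) (f.order + chi n) := by
    have hsplit : D n f = D n fN + D n (f - fN) := by
      rw [← map_add]
      congr 1
      ring
    rw [hsplit]
    apply vge_add
    · rw [hfN, map_sum]
      apply vge_sum
      intro m hm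
      rw [Finset.mem_Ico] at hm
      rw [map_smul]
      exact vge_mono (vge_smul _ (mono n m)) (by linarith [hm.1])
    · exact hM2 _ (vge_mono hfsub (le_max_left _ _))
  by_cases hD : D n f = 0
  · rw [_root_.addVal, if_pos hD]
    exact le_top
  · rw [_root_.addVal, if_neg hD]
    have horder : f.order + chi n ≤ (D n f).order := order_le_of_vge hD hDf
    rw [chiP n hn] at horder
    exact_mod_cast (by linarith : (((n : ℤ) - 1) * e - (2 * (n : ℤ) - 1) * r + f.order : ℤ)
      ≤ (D n f).order)
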